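/- arXiv:1412.3049 — 2 statements merged into one kernel-verified Lean document; each statement's English description precedes it below -/
import Mathlib

section
/- Let X, Y ⊆ ℝⁿ and let φ : X → Y be a bi-Lipschitz homeomorphism, with Lipschitz extensions φ̃, ψ̃ : ℝⁿ → ℝⁿ of φ and φ⁻¹. Then the map Φ(x,y) = (x − ψ̃(y + φ̃(x)), y + φ̃(x)) on ℝⁿ × ℝⁿ is Lipschitz and its inverse Ψ(z,w) = (z + ψ̃(w), w − φ̃(z + ψ̃(w))) is Lipschitz; hence Φ is a bi-Lipschitz homeomorphism of ℝ²ⁿ. -/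
open Metric Set

theorem stmt_1 {n : ℕ} (X Y : Set (EuclideanSpace ℝ (Fin n)))
    (φ : X ≃ Y) (Kφ Kψ : NNReal)
    (hφ : LipschitzWith Kφ (fun x : X => (φ x : EuclideanSpace ℝ (Fin n))))
    (hψ : LipschitzWith Kψ (fun y : Y => (φ.symm y : EuclideanSpace ℝ (Fin n))))
    (φt ψt : EuclideanSpace ℝ (Fin n) → EuclideanSpace ℝ (Fin n))
    (K₁ K₂ : NNReal) (hφt : LipschitzWith K₁ φt) (hψt : LipschitzWith K₂ ψt)
    (hext₁ : ∀ x : X, φt x = φ x) (hext₂ : ∀ y : Y, ψt y = φ.symm y) :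
    ∃ K : NNReal,
      LipschitzWith K
        (fun p : EuclideanSpace ℝ (Fin n) × EuclideanSpace ℝ (Fin n) =>
          (p.1 - ψt (p.2 + φt p.1), p.2 + φt p.1)) ∧
      LipschitzWith K
        (fun q : EuclideanSpace ℝ (Fin n) × EuclideanSpace ℝ (Fin n) =>
          (q.1 + ψt q.2, q.2 - φt (q.1 + ψt q.2))) ∧
      Function.LeftInverse
        (fun q : EuclideanSpace ℝ (Fin n) × EuclideanSpace ℝ (Fin n) =>
          (q.1 + ψt q.2, q.2 - φt (q.1 + ψt q.2)))
        (fun p => (p.1 - ψt (p.2 + φt p.1), p.2 + φt p.1)) ∧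
      Function.RightInverse
        (fun q : EuclideanSpace ℝ (Fin n) × EuclideanSpace ℝ (Fin n) =>
          (q.1 + ψt q.2, q.2 - φt (q.1 + ψt q.2)))
        (fun p => (p.1 - ψt (p.2 + φt p.1), p.2 + φt p.1)) := by
  classical
  -- Lipschitz constants
  have hg : LipschitzWith (1 + K₁) (fun p : EuclideanSpace ℝ (Fin n) × EuclideanSpace ℝ (Fin n) => p.2 + φt p.1) := by
    simpa [Function.comp] using
      LipschitzWith.prod_snd.add (hφt.comp LipschitzWith.prod_fst)
  have hf1 : LipschitzWith (1 + K₂ * (1 + K₁))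
      (fun p : EuclideanSpace ℝ (Fin n) × EuclideanSpace ℝ (Fin n) => p.1 - ψt (p.2 + φt p.1)) := by
    simpa [Function.comp] using LipschitzWith.prod_fst.sub (hψt.comp hg)
  have hΦ : LipschitzWith (max (1 + K₂ * (1 + K₁)) (1 + K₁))
      (fun p : EuclideanSpace ℝ (Fin n) × EuclideanSpace ℝ (Fin n) => (p.1 - ψt (p.2 + φt p.1), p.2 + φt p.1)) :=
    hf1.prodMk hg
  have hh : LipschitzWith (1 + K₂) (fun q : EuclideanSpace ℝ (Fin n) × EuclideanSpace ℝ (Fin n) => q.1 + ψt q.2) := by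
    simpa [Function.comp] using
      LipschitzWith.prod_fst.add (hψt.comp LipschitzWith.prod_snd)
  have hf2 : LipschitzWith (1 + K₁ * (1 + K₂))
      (fun q : EuclideanSpace ℝ (Fin n) × EuclideanSpace ℝ (Fin n) => q.2 - φt (q.1 + ψt q.2)) := by
    simpa [Function.comp] using LipschitzWith.prod_snd.sub (hφt.comp hh)
  have hΨ : LipschitzWith (max (1 + K₂) (1 + K₁ * (1 + K₂)))
      (fun q : EuclideanSpace ℝ (Fin n) × EuclideanSpace ℝ (Fin n) => (q.1 + ψt q.2, q.2 - φt (q.1 + ψt q.2))) :=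
    hh.prodMk hf2
  refine ⟨max (max (1 + K₂ * (1 + K₁)) (1 + K₁)) (max (1 + K₂) (1 + K₁ * (1 + K₂))),
    hΦ.weaken (le_max_left _ _), hΨ.weaken (le_max_right _ _), ?_, ?_⟩
  · intro p
    simp only
    ext <;> simp <;> abel
  · intro q
    simp only
    ext <;> simp <;> abel
end

section
/- If X, Y ⊆ ℝⁿ are bi-Lipschitz homeomorphic, then there exists a bi-Lipschitz homeomorphism Φ : ℝ²ⁿ → ℝ²ⁿ with Φ(X × {0}) = {0} × Y. -/
open Metric Set

/-- Lipschitz extension from a subset of Euclidean space to the whole space. -/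
lemma extend_lipschitz {n : ℕ} {S : Set (EuclideanSpace ℝ (Fin n))} {K : NNReal}
    {f : S → EuclideanSpace ℝ (Fin n)} (hf : LipschitzWith K f) :
    ∃ (F : EuclideanSpace ℝ (Fin n) → EuclideanSpace ℝ (Fin n)) (K' : NNReal),
      LipschitzWith K' F ∧ ∀ x (hx : x ∈ S), F x = f ⟨x, hx⟩ := by
  classical
  set e := WithLp.equiv 2 (Fin n → ℝ)
  set g : EuclideanSpace ℝ (Fin n) → Fin n → ℝ :=
    fun x => e (if h : x ∈ S then f ⟨x, h⟩ else 0) with hg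
  have hgl : LipschitzOnWith K g S := by
    intro x hx y hy
    simp only [hg, dif_pos hx, dif_pos hy]
    calc edist (e (f ⟨x, hx⟩)) (e (f ⟨y, hy⟩))
        ≤ 1 * edist (f ⟨x, hx⟩) (f ⟨y, hy⟩) :=
          (PiLp.lipschitzWith_ofLp 2 _) _ _
      _ ≤ 1 * (K * edist (⟨x, hx⟩ : S) (⟨y, hy⟩ : S)) := by
          gcongr
          exact hf _ _
      _ = K * edist x y := by rw [one_mul]; rfl
  obtain ⟨G, hG, hEq⟩ := hgl.extend_pi
  refine ⟨fun x => e.symm (G x), ((Fintype.card (Fin n) : NNReal) ^ ((1 : ENNReal) / 2).toReal) * K,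
    ?_, ?_⟩
  · have hsymm : LipschitzWith ((Fintype.card (Fin n) : NNReal) ^ ((1 : ENNReal) / 2).toReal)
        (e.symm : (Fin n → ℝ) → EuclideanSpace ℝ (Fin n)) :=
      (PiLp.antilipschitzWith_ofLp 2 (fun _ : Fin n => ℝ)).to_rightInverse e.right_inv
    exact hsymm.comp hG
  · intro x hx
    have := hEq hx
    simp only [hg, dif_pos hx] at this
    show e.symm (G x) = f ⟨x, hx⟩
    rw [← this, e.symm_apply_apply]


/-- The shear-type self-homeomorphism of `E × E` built from two maps `F G : E → E`. -/
def shearEquiv {E : Type*} [AddCommGroup E] (F G : E → E) : (E × E) ≃ (E × E) where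
  toFun p := (p.1 - G (p.2 + F p.1), p.2 + F p.1)
  invFun q := (q.1 + G q.2, q.2 - F (q.1 + G q.2))
  left_inv p := by simp
  right_inv q := by simp

lemma shearEquiv_lipschitz {E : Type*} [SeminormedAddCommGroup E] {KF KG : NNReal}
    {F G : E → E} (hF : LipschitzWith KF F) (hG : LipschitzWith KG G) :
    LipschitzWith (max (1 + KG * (1 + KF * 1)) (1 + KF * 1)) (shearEquiv F G) := by
  have hfst : LipschitzWith 1 (fun p : E × E => p.1) := LipschitzWith.prod_fst
  have hsnd : LipschitzWith 1 (fun p : E × E => p.2) := LipschitzWith.prod_snd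
  have h2 : LipschitzWith (1 + KF * 1) (fun p : E × E => p.2 + F p.1) :=
    hsnd.add (hF.comp hfst)
  have h1 : LipschitzWith (1 + KG * (1 + KF * 1))
      (fun p : E × E => p.1 - G (p.2 + F p.1)) :=
    hfst.sub (hG.comp h2)
  exact h1.prodMk h2

lemma shearEquiv_symm_lipschitz {E : Type*} [SeminormedAddCommGroup E] {KF KG : NNReal}
    {F G : E → E} (hF : LipschitzWith KF F) (hG : LipschitzWith KG G) :
    LipschitzWith (max (1 + KG * 1) (1 + KF * (1 + KG * 1))) (shearEquiv F G).symm := by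
  have hfst : LipschitzWith 1 (fun p : E × E => p.1) := LipschitzWith.prod_fst
  have hsnd : LipschitzWith 1 (fun p : E × E => p.2) := LipschitzWith.prod_snd
  have h2 : LipschitzWith (1 + KG * 1) (fun q : E × E => q.1 + G q.2) :=
    hfst.add (hG.comp hsnd)
  have h1 : LipschitzWith (1 + KF * (1 + KG * 1))
      (fun q : E × E => q.2 - F (q.1 + G q.2)) :=
    hsnd.sub (hF.comp h2)
  exact h2.prodMk h1

theorem stmt_2 {n : ℕ} (X Y : Set (EuclideanSpace ℝ (Fin n)))
    (h : ∃ (φ : X ≃ Y) (Kφ Kψ : NNReal),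
      LipschitzWith Kφ (fun x : X => (φ x : EuclideanSpace ℝ (Fin n))) ∧
      LipschitzWith Kψ (fun y : Y => (φ.symm y : EuclideanSpace ℝ (Fin n)))) :
    ∃ (Φ : (EuclideanSpace ℝ (Fin n) × EuclideanSpace ℝ (Fin n)) ≃
           (EuclideanSpace ℝ (Fin n) × EuclideanSpace ℝ (Fin n))) (K : NNReal),
      LipschitzWith K Φ ∧ LipschitzWith K Φ.symm ∧
      Φ '' (X ×ˢ ({0} : Set (EuclideanSpace ℝ (Fin n)))) =
        ({0} : Set (EuclideanSpace ℝ (Fin n))) ×ˢ Y := by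
  obtain ⟨φ, Kφ, Kψ, hφ, hψ⟩ := h
  obtain ⟨F, KF, hF, hFeq⟩ := extend_lipschitz hφ
  obtain ⟨G, KG, hG, hGeq⟩ := extend_lipschitz hψ
  refine ⟨shearEquiv F G,
    max (max (1 + KG * (1 + KF * 1)) (1 + KF * 1)) (max (1 + KG * 1) (1 + KF * (1 + KG * 1))),
    (shearEquiv_lipschitz hF hG).weaken (le_max_left _ _),
    (shearEquiv_symm_lipschitz hF hG).weaken (le_max_right _ _), ?_⟩
  ext ⟨a, b⟩
  simp only [mem_image, mem_prod, mem_singleton_iff, Prod.ext_iff, shearEquiv,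
    Equiv.coe_fn_mk, Prod.exists]
  constructor
  · rintro ⟨x, y, ⟨hx, rfl⟩, ha, hb⟩
    have hFx : F x = φ ⟨x, hx⟩ := hFeq x hx
    have hGy : G (φ ⟨x, hx⟩ : EuclideanSpace ℝ (Fin n)) = x := by
      rw [hGeq _ (φ ⟨x, hx⟩).2]
      simp
    subst ha hb
    constructor
    · rw [zero_add, hFx, hGy, sub_self]
    · rw [zero_add, hFx]
      exact (φ ⟨x, hx⟩).2
  · rintro ⟨ha, hb⟩
    subst ha
    refine ⟨(φ.symm ⟨b, hb⟩ : EuclideanSpace ℝ (Fin n)), 0, ⟨(φ.symm ⟨b, hb⟩).2, rfl⟩, ?_, ?_⟩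
    · have hFx : F (φ.symm ⟨b, hb⟩ : EuclideanSpace ℝ (Fin n)) = b := by
        rw [hFeq _ (φ.symm ⟨b, hb⟩).2]
        simp
      have hGb : G b = (φ.symm ⟨b, hb⟩ : EuclideanSpace ℝ (Fin n)) := hGeq b hb
      rw [zero_add, hFx, hGb, sub_self]
    · rw [zero_add, hFeq _ (φ.symm ⟨b, hb⟩).2]
      simp
end
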